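/- Let ≿ be a preference relation (reflexive and transitive) on the set 𝒰 of bounded real sequences satisfying axioms A1, A2 and A3. Then ≿ is complete on 𝒰₊: for all u, v ∈ 𝒰₊, if u ≿ v does not hold, then v ≻ u. -/

import Mathlib

open Filter Finset Topology

/-- A bounded real sequence (an element of 𝒰). Index `t : ℕ` represents time `t+1`. -/
def Bdd (u : ℕ → ℝ) : Prop := ∃ C : ℝ, ∀ t, |u t| ≤ C

/-- Partial sum `∑_{t=1}^n u_t`. -/
noncomputable def psum (u : ℕ → ℝ) (n : ℕ) : ℝ := ∑ t ∈ Finset.range n, u t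

/-- Cesàro average `(1/n) ∑_{T=1}^n ∑_{t=1}^T u_t`. -/
noncomputable def cesaroAvg (u : ℕ → ℝ) (n : ℕ) : ℝ :=
  (∑ T ∈ Finset.range n, psum u (T + 1)) / n

/-- The series `∑ u_t` is Cesàro-summable. -/
def CesaroSummable (u : ℕ → ℝ) : Prop :=
  ∃ L : ℝ, Filter.Tendsto (cesaroAvg u) Filter.atTop (nhds L)

/-- The series `∑ u_t` has bounded partial sums. -/
def BddPartialSums (u : ℕ → ℝ) : Prop := ∃ C : ℝ, ∀ n, |psum u n| ≤ C

/-- The long-run average of `u` exists and equals `a`. -/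
def AvgTo (u : ℕ → ℝ) (a : ℝ) : Prop :=
  Filter.Tendsto (fun n : ℕ => psum u n / n) Filter.atTop (nhds a)

/-- The sequence `(c, u_1, u_2, …)`. -/
def cons (c : ℝ) (u : ℕ → ℝ) : ℕ → ℝ := fun t => if t = 0 then c else u (t - 1)

/-- The discounted sum `∑_{t=1}^∞ β^t d_t`. -/
noncomputable def discSum (d : ℕ → ℝ) (β : ℝ) : ℝ := ∑' t : ℕ, β ^ (t + 1) * d t

/-- The Blackwell relation `u ≿_B v`. -/
def BlackwellGE (u v : ℕ → ℝ) : Prop :=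
  0 ≤ Filter.liminf (fun β => discSum (u - v) β) (nhdsWithin 1 (Set.Iio 1))

/-- Veinott's average overtaking relation `u ≿_V v`. -/
def VeinottGE (u v : ℕ → ℝ) : Prop :=
  0 ≤ Filter.liminf (cesaroAvg (u - v)) Filter.atTop

/-- Reflexivity of the preference relation on 𝒰. -/
def ReflOn (R : (ℕ → ℝ) → (ℕ → ℝ) → Prop) : Prop := ∀ u, Bdd u → R u u

/-- Transitivity of the preference relation on 𝒰. -/
def TransOn (R : (ℕ → ℝ) → (ℕ → ℝ) → Prop) : Prop :=
  ∀ u v w, Bdd u → Bdd v → Bdd w → R u v → R v w → R u w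

/-- Strict preference `u ≻ v`. -/
def StrictPref (R : (ℕ → ℝ) → (ℕ → ℝ) → Prop) (u v : ℕ → ℝ) : Prop := R u v ∧ ¬ R v u

/-- Axiom A1: `u > v` implies `u ≻ v`. -/
def AxiomA1 (R : (ℕ → ℝ) → (ℕ → ℝ) → Prop) : Prop :=
  ∀ u v, Bdd u → Bdd v → (∀ t, v t ≤ u t) → (∃ t, v t < u t) → StrictPref R u v

/-- Axiom A2: `u ≿ v` implies `u + α ≿ v + α`. -/
def AxiomA2 (R : (ℕ → ℝ) → (ℕ → ℝ) → Prop) : Prop :=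
  ∀ u v α, Bdd u → Bdd v → Bdd α → R u v → R (u + α) (v + α)

/-- Axiom A3: if the long-run average `ū` exists then `(ū, u) ∼ u`. -/
def AxiomA3 (R : (ℕ → ℝ) → (ℕ → ℝ) → Prop) : Prop :=
  ∀ u a, Bdd u → AvgTo u a → (R (cons a u) u ∧ R u (cons a u))

/-- `w` is eventually periodic with period `p` from time `T` onward. -/
def EvPeriodicFrom (w : ℕ → ℝ) (p T : ℕ) : Prop := 1 ≤ p ∧ ∀ t, T ≤ t → w (t + p) = w t

/-- `w` is eventually periodic. -/
def EvPeriodic (w : ℕ → ℝ) : Prop := ∃ p T : ℕ, EvPeriodicFrom w p T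

/-- The set 𝒰₊: bounded streams of the form `w + Δ`, `w` eventually periodic and
`∑ Δ_t` Cesàro-summable with bounded partial sums. -/
def UPlus (u : ℕ → ℝ) : Prop :=
  Bdd u ∧ ∃ w Δ : ℕ → ℝ, u = w + Δ ∧ EvPeriodic w ∧ CesaroSummable Δ ∧ BddPartialSums Δ

/-- An `S × S` row-stochastic matrix. -/
def RowStochastic {S : ℕ} (Q : Matrix (Fin S) (Fin S) ℝ) : Prop :=
  (∀ i j, 0 ≤ Q i j) ∧ ∀ i, ∑ j, Q i j = 1

/-- 𝒰_stat: streams generated by stationary policies of finite MDPs,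
`u_t = (Q^{t-1} · R)_s` (here `u t` is `u_{t+1}`, so `u t = (Q^t · R)_s`). -/
def UStat (u : ℕ → ℝ) : Prop :=
  ∃ (S : ℕ) (_ : 0 < S) (Q : Matrix (Fin S) (Fin S) ℝ) (R : Fin S → ℝ) (s : Fin S),
    RowStochastic Q ∧ ∀ t : ℕ, u t = ((Q ^ t).mulVec R) s


/-! ### Auxiliary lemmas -/

lemma bdd_zero : Bdd (0 : ℕ → ℝ) := ⟨0, fun t => by simp⟩

lemma bdd_sub {a b : ℕ → ℝ} (ha : Bdd a) (hb : Bdd b) : Bdd (fun t => a t - b t) := by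
  obtain ⟨C, hC⟩ := ha; obtain ⟨D, hD⟩ := hb
  exact ⟨C + D, fun t => (abs_sub _ _).trans (add_le_add (hC t) (hD t))⟩

lemma bdd_add {a b : ℕ → ℝ} (ha : Bdd a) (hb : Bdd b) : Bdd (fun t => a t + b t) := by
  obtain ⟨C, hC⟩ := ha; obtain ⟨D, hD⟩ := hb
  exact ⟨C + D, fun t => (abs_add_le _ _).trans (add_le_add (hC t) (hD t))⟩

lemma bdd_cons {c : ℝ} {a : ℕ → ℝ} (ha : Bdd a) : Bdd (_root_.cons c a) := by
  obtain ⟨C, hC⟩ := ha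
  refine ⟨|c| + (C + |a 0|), fun t => ?_⟩
  unfold _root_.cons
  split
  · nlinarith [abs_nonneg (a 0), (abs_nonneg (a 0)).trans (hC 0)]
  · nlinarith [hC (t-1), abs_nonneg c, abs_nonneg (a 0)]

lemma psum_succ (u : ℕ → ℝ) (k : ℕ) : psum u (k + 1) = psum u k + u k := by
  unfold psum; rw [Finset.sum_range_succ]

lemma psum_one (u : ℕ → ℝ) : psum u 1 = u 0 := by
  unfold psum; rw [Finset.sum_range_one]

lemma psum_chunk (u : ℕ → ℝ) (a b : ℕ) :
    psum u (a + b) = psum u a + ∑ i ∈ Finset.range b, u (a + i) := by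
  induction b with
  | zero => simp
  | succ b ih =>
    have : a + (b + 1) = (a + b) + 1 := by omega
    rw [this, psum_succ, ih, Finset.sum_range_succ]
    ring

lemma psum_sub (a b : ℕ → ℝ) (k : ℕ) :
    psum (fun t => a t - b t) k = psum a k - psum b k := by
  unfold psum; rw [Finset.sum_sub_distrib]

lemma psum_add' (a b : ℕ → ℝ) (k : ℕ) :
    psum (fun t => a t + b t) k = psum a k + psum b k := by
  unfold psum; rw [Finset.sum_add_distrib]

/-- Transfer a preference along a translation, with explicit pointwise identification. -/
lemma transfer {R : (ℕ → ℝ) → (ℕ → ℝ) → Prop} (hA2 : AxiomA2 R)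
    {a b α a' b' : ℕ → ℝ} (ha : Bdd a) (hb : Bdd b) (hα : Bdd α) (h : R a b)
    (ha' : ∀ t, a t + α t = a' t) (hb' : ∀ t, b t + α t = b' t) : R a' b' := by
  have h2 := hA2 a b α ha hb hα h
  have e1 : a + α = a' := funext ha'
  have e2 : b + α = b' := funext hb'
  rwa [e1, e2] at h2

/-- Any element of an eventually periodic sequence appears in its initial segment. -/
lemma evp_reduce {z : ℕ → ℝ} {p T : ℕ} (hp : 1 ≤ p)
    (hper : ∀ t, T ≤ t → z (t + p) = z t) : ∀ t, ∃ s, s < T + p ∧ z t = z s := by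
  intro t
  induction t using Nat.strong_induction_on with
  | _ t ih =>
    by_cases hlt : t < T + p
    · exact ⟨t, hlt, rfl⟩
    · push_neg at hlt
      have h1 : z t = z (t - p) := by
        have := hper (t - p) (by omega)
        rw [← this]; congr 1; omega
      obtain ⟨s, hs, he⟩ := ih (t - p) (by omega)
      exact ⟨s, hs, h1.trans he⟩

lemma evp_bdd {z : ℕ → ℝ} {p T : ℕ} (hp : 1 ≤ p)
    (hper : ∀ t, T ≤ t → z (t + p) = z t) : Bdd z := by
  refine ⟨∑ s ∈ Finset.range (T + p), |z s|, fun t => ?_⟩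
  obtain ⟨s, hs, he⟩ := evp_reduce hp hper t
  rw [he]
  exact Finset.single_le_sum (f := fun s => |z s|) (fun i _ => abs_nonneg _)
    (Finset.mem_range.2 hs)

/-- Window sums of length `p` of an eventually `p`-periodic sequence are constant. -/
lemma evp_window {z : ℕ → ℝ} {p T : ℕ}
    (hper : ∀ t, T ≤ t → z (t + p) = z t) :
    ∀ t, T ≤ t → ∑ i ∈ Finset.range p, z (t + i) = ∑ i ∈ Finset.range p, z (T + i) := by
  intro t ht
  induction t, ht using Nat.le_induction with
  | base => rfl
  | succ t ht ih =>
    rw [← ih]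
    have h1 : ∑ i ∈ Finset.range p, z (t + 1 + i) = ∑ i ∈ Finset.range p, z (t + (i + 1)) :=
      Finset.sum_congr rfl (fun i _ => by congr 1; omega)
    have h2 : ∑ i ∈ Finset.range (p + 1), z (t + i)
        = (∑ i ∈ Finset.range p, z (t + (i + 1))) + z (t + 0) :=
      Finset.sum_range_succ' (fun i => z (t + i)) p
    have h3 : ∑ i ∈ Finset.range (p + 1), z (t + i)
        = (∑ i ∈ Finset.range p, z (t + i)) + z (t + p) :=
      Finset.sum_range_succ (fun i => z (t + i)) p
    have h4 : z (t + p) = z t := hper t ht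
    have h5 : z (t + 0) = z t := by norm_num
    rw [h1]
    rw [h2, h4, h5] at h3
    linarith

/-- An eventually periodic sequence has a long-run average, namely the period average. -/
lemma evp_avgTo {z : ℕ → ℝ} {p T : ℕ} (hp : 1 ≤ p)
    (hper : ∀ t, T ≤ t → z (t + p) = z t) :
    AvgTo z ((∑ i ∈ Finset.range p, z (T + i)) / p) := by
  set m : ℝ := (∑ i ∈ Finset.range p, z (T + i)) / p with hm
  have hpne : (p : ℝ) ≠ 0 := Nat.cast_ne_zero.2 (by omega)
  set ζ : ℕ → ℝ := fun t => z t - m with hζ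
  have hps : ∀ t, T ≤ t → psum ζ (t + p) = psum ζ t := by
    intro t ht
    rw [psum_chunk ζ t p]
    have hz : ∑ i ∈ Finset.range p, ζ (t + i) = 0 := by
      have hsub : ∑ i ∈ Finset.range p, ζ (t + i)
          = (∑ i ∈ Finset.range p, z (t + i)) - p * m := by
        simp only [hζ, Finset.sum_sub_distrib, Finset.sum_const, Finset.card_range,
          nsmul_eq_mul]
      rw [hsub, evp_window hper t ht, hm]
      field_simp
      ring
    rw [hz, add_zero]
  have hbdd : Bdd (fun k => psum ζ k) := evp_bdd hp hps
  obtain ⟨C, hC⟩ := hbdd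
  have hpz : ∀ k : ℕ, psum z k = psum ζ k + k * m := by
    intro k
    have : psum ζ k = psum z k - k * m := by
      unfold psum
      simp only [hζ, Finset.sum_sub_distrib, Finset.sum_const, Finset.card_range,
        nsmul_eq_mul]
    linarith
  have h0 : Tendsto (fun k : ℕ => psum ζ k / k) atTop (nhds 0) := by
    refine squeeze_zero_norm (a := fun k : ℕ => C / k) (fun k => ?_)
      (tendsto_const_div_atTop_nhds_zero_nat C)
    rcases Nat.eq_zero_or_pos k with hk | hk
    · subst hk; simp [psum]
    · rw [Real.norm_eq_abs, abs_div, abs_of_nonneg (show (0:ℝ) ≤ (k:ℝ) from Nat.cast_nonneg k)]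
      exact div_le_div_of_nonneg_right (hC k) (Nat.cast_nonneg k)
  have h1 := h0.add_const m
  rw [zero_add] at h1
  refine h1.congr' ?_
  filter_upwards [eventually_ge_atTop 1] with k hk
  have hkne : (k : ℝ) ≠ 0 := Nat.cast_ne_zero.2 (by omega)
  rw [hpz k]
  field_simp

/-- Key substitution: a stream with bounded, Cesàro-convergent partial sums is
indifferent to the stream paying its Cesàro value in the first period. -/
lemma indiff_e0 {R : (ℕ → ℝ) → (ℕ → ℝ) → Prop} (hA2 : AxiomA2 R) (hA3 : AxiomA3 R)
    {Δ : ℕ → ℝ} {L : ℝ} (hσb : Bdd (fun t => psum Δ (t + 1)))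
    (havg : AvgTo (fun t => psum Δ (t + 1)) L) :
    R Δ (fun t => if t = 0 then L else 0) ∧ R (fun t => if t = 0 then L else 0) Δ := by
  set σ : ℕ → ℝ := fun t => psum Δ (t + 1) with hσ
  have hA3' := hA3 σ L hσb havg
  have hbc : Bdd (_root_.cons L σ) := bdd_cons hσb
  have hbα : Bdd (fun t => -(_root_.cons 0 σ t)) := by
    obtain ⟨C, hC⟩ := bdd_cons (c := 0) hσb
    exact ⟨C, fun t => by rw [abs_neg]; exact hC t⟩
  have key1 : ∀ t, _root_.cons L σ t + (-(_root_.cons 0 σ t)) = (fun t => if t = 0 then L else 0) t := by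
    intro t
    cases t with
    | zero => simp [_root_.cons]
    | succ k => simp [_root_.cons]
  have key2 : ∀ t, σ t + (-(_root_.cons 0 σ t)) = Δ t := by
    intro t
    cases t with
    | zero => simp [_root_.cons, hσ, psum_one]
    | succ k =>
      simp only [_root_.cons, hσ, Nat.add_sub_cancel, if_neg (Nat.succ_ne_zero k)]
      rw [psum_succ Δ (k + 1)]
      ring
  constructor
  · exact transfer hA2 hσb hbc hbα hA3'.2 key2 key1
  · exact transfer hA2 hbc hσb hbα hA3'.1 key1 key2

/-- Spreading: `c·𝟙 + Δ'` is indifferent to `c·𝟙` plus the Cesàro value `L'` of `Δ'`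
spread evenly over the first `n` periods. -/
lemma spread {R : (ℕ → ℝ) → (ℕ → ℝ) → Prop} (hA2 : AxiomA2 R) (hA3 : AxiomA3 R)
    {Δ' : ℕ → ℝ} {L' c : ℝ} {n : ℕ} (hn : 1 ≤ n)
    (hΔb : Bdd Δ') (hσb : Bdd (fun t => psum Δ' (t + 1)))
    (havg : AvgTo (fun t => psum Δ' (t + 1)) L') :
    R (fun t => c + Δ' t) (fun t => c + (if t < n then L' / n else 0)) ∧
    R (fun t => c + (if t < n then L' / n else 0)) (fun t => c + Δ' t) := by
  have hnne : (n : ℝ) ≠ 0 := Nat.cast_ne_zero.2 (by omega)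
  have hhb : Bdd (fun t : ℕ => if t < n then L' / n else 0) := by
    refine ⟨|L' / n|, fun t => ?_⟩
    dsimp only; split <;> simp
  -- corr : partial sums of the spread payment, eventually constant
  have hcorr_per : ∀ t, n ≤ t →
      psum (fun s : ℕ => if s < n then L' / n else 0) (t + 1 + 1)
        = psum (fun s : ℕ => if s < n then L' / n else 0) (t + 1) := by
    intro t ht
    rw [psum_succ]
    have h0 : (if t + 1 < n then L' / (n:ℝ) else 0) = 0 := if_neg (by omega)
    show psum _ (t+1) + (if t + 1 < n then L' / (n:ℝ) else 0) = psum _ (t+1)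
    rw [h0, add_zero]
  have hcorr_per' : ∀ t, n ≤ t →
      (fun t => psum (fun s : ℕ => if s < n then L' / n else 0) (t + 1)) (t + 1)
        = (fun t => psum (fun s : ℕ => if s < n then L' / n else 0) (t + 1)) t :=
    fun t ht => hcorr_per t ht
  have hcorrb : Bdd (fun t => psum (fun s : ℕ => if s < n then L' / n else 0) (t + 1)) :=
    evp_bdd (le_refl 1) hcorr_per'
  have hval : psum (fun s : ℕ => if s < n then L' / n else 0) (n + 1) = L' := by
    rw [psum_succ]
    have h0 : (if n < n then L' / (n:ℝ) else 0) = 0 := if_neg (lt_irrefl n)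
    have h2 : psum (fun s : ℕ => if s < n then L' / n else 0) n = n * (L' / n) := by
      show (∑ i ∈ Finset.range n, if i < n then L' / (n:ℝ) else 0) = n * (L' / n)
      rw [Finset.sum_ite_of_true (fun i hi => Finset.mem_range.1 hi),
        Finset.sum_const, Finset.card_range, nsmul_eq_mul]
    rw [h0, h2, add_zero]
    field_simp
  have hcorr_avg : AvgTo (fun t => psum (fun s : ℕ => if s < n then L' / n else 0) (t + 1)) L' := by
    have h1 := evp_avgTo (z := fun t => psum (fun s : ℕ => if s < n then L' / n else 0) (t + 1))
      (p := 1) (T := n) (le_refl 1) hcorr_per'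
    simp only [Finset.sum_range_one, Nat.add_zero, Nat.cast_one, div_one] at h1
    rwa [hval] at h1
  -- Δs := Δ' - spread payment
  have hσs_eq : ∀ k, psum (fun t => Δ' t - (if t < n then L' / n else 0)) k
      = psum Δ' k - psum (fun s : ℕ => if s < n then L' / n else 0) k :=
    fun k => psum_sub _ _ k
  have hσsb : Bdd (fun t => psum (fun t => Δ' t - (if t < n then L' / n else 0)) (t + 1)) := by
    obtain ⟨C, hC⟩ := bdd_sub hσb hcorrb
    refine ⟨C, fun t => ?_⟩
    show |psum (fun t => Δ' t - (if t < n then L' / n else 0)) (t + 1)| ≤ C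
    rw [hσs_eq (t + 1)]
    exact hC t
  have hσs_avg : AvgTo (fun t => psum (fun t => Δ' t - (if t < n then L' / n else 0)) (t + 1)) 0 := by
    have h1 := havg.sub hcorr_avg
    rw [sub_self] at h1
    refine h1.congr (fun k => ?_)
    rw [← sub_div]
    congr 1
    have h2 : psum (fun t => psum (fun t => Δ' t - (if t < n then L' / n else 0)) (t + 1)) k
        = psum (fun t => psum Δ' (t + 1)
            - psum (fun s : ℕ => if s < n then L' / n else 0) (t + 1)) k := by
      unfold psum
      exact Finset.sum_congr rfl (fun t _ => hσs_eq (t + 1))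
    rw [h2, psum_sub]
  have hind := indiff_e0 hA2 hA3 hσsb hσs_avg
  have hZb : Bdd (fun t : ℕ => if t = 0 then (0 : ℝ) else 0) :=
    ⟨0, fun t => by dsimp only; split <;> simp⟩
  have hΔsb : Bdd (fun t => Δ' t - (if t < n then L' / n else 0)) := bdd_sub hΔb hhb
  have hαb : Bdd (fun t : ℕ => c + (if t < n then L' / n else 0)) :=
    bdd_add ⟨|c|, fun _ => le_rfl⟩ hhb
  have e1 : ∀ t, (Δ' t - (if t < n then L' / n else 0))
      + (c + (if t < n then L' / n else 0)) = c + Δ' t := fun t => by ring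
  have e2 : ∀ t, (if t = 0 then (0:ℝ) else 0) + (c + (if t < n then L' / n else 0))
      = c + (if t < n then L' / n else 0) := fun t => by
    have : (if t = 0 then (0:ℝ) else 0) = 0 := by split <;> rfl
    rw [this, zero_add]
  exact ⟨transfer hA2 hΔsb hZb hαb hind.1 e1 e2,
    transfer hA2 hZb hΔsb hαb hind.2 e2 e1⟩

/-- Core completeness lemma: any stream in 𝒰₊ is comparable with `0`. -/
lemma key {R : (ℕ → ℝ) → (ℕ → ℝ) → Prop} (htrans : TransOn R) (hA1 : AxiomA1 R)
    (hA2 : AxiomA2 R) (hA3 : AxiomA3 R) (d w Δ : ℕ → ℝ) (p T : ℕ)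
    (hdb : Bdd d) (hd : ∀ t, d t = w t + Δ t) (hp : 1 ≤ p)
    (hw : ∀ t, T ≤ t → w (t + p) = w t)
    (hces : CesaroSummable Δ) (hbps : BddPartialSums Δ) : R d 0 ∨ R 0 d := by
  obtain ⟨L, hL⟩ := hces
  have havgσ : AvgTo (fun t => psum Δ (t + 1)) L := hL
  have hpne : (p : ℝ) ≠ 0 := Nat.cast_ne_zero.2 (by omega)
  set c : ℝ := (∑ i ∈ Finset.range p, w (T + i)) / p with hc
  -- the centered periodic part has bounded, Cesàro-convergent partial sums
  have hσ₂per : ∀ t, T ≤ t → psum (fun s => w s - c) (t + p + 1)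
      = psum (fun s => w s - c) (t + 1) := by
    intro t ht
    have ha : t + p + 1 = (t + 1) + p := by omega
    rw [ha, psum_chunk]
    have hz : ∑ i ∈ Finset.range p, (w (t + 1 + i) - c) = 0 := by
      rw [Finset.sum_sub_distrib, Finset.sum_const, Finset.card_range, nsmul_eq_mul,
        evp_window hw (t + 1) (by omega), hc]
      field_simp
      ring
    show psum _ (t+1) + ∑ i ∈ Finset.range p, (w (t + 1 + i) - c) = psum _ (t+1)
    rw [hz, add_zero]
  have hσ₂per' : ∀ t, T ≤ t →
      (fun t => psum (fun s => w s - c) (t + 1)) (t + p)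
        = (fun t => psum (fun s => w s - c) (t + 1)) t := fun t ht => hσ₂per t ht
  have hσ₂b : Bdd (fun t => psum (fun s => w s - c) (t + 1)) := evp_bdd hp hσ₂per'
  obtain ⟨L₂, hσ₂avg⟩ : ∃ L₂, AvgTo (fun t => psum (fun s => w s - c) (t + 1)) L₂ :=
    ⟨_, evp_avgTo (z := fun t => psum (fun s => w s - c) (t + 1)) (p := p) (T := T) hp hσ₂per'⟩
  -- combined fluctuating part
  have hσΔb : Bdd (fun t => psum Δ (t + 1)) := by
    obtain ⟨C, hC⟩ := hbps; exact ⟨C, fun t => hC (t + 1)⟩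
  have hσ'eq : ∀ k, psum (fun s => Δ s + (w s - c)) k
      = psum Δ k + psum (fun s => w s - c) k := fun k => psum_add' _ _ k
  have hσ'b : Bdd (fun t => psum (fun s => Δ s + (w s - c)) (t + 1)) := by
    obtain ⟨C, hC⟩ := bdd_add hσΔb hσ₂b
    refine ⟨C, fun t => ?_⟩
    show |psum (fun s => Δ s + (w s - c)) (t + 1)| ≤ C
    rw [hσ'eq (t + 1)]
    exact hC t
  have hσ'avg : AvgTo (fun t => psum (fun s => Δ s + (w s - c)) (t + 1)) (L + L₂) := by
    have h1 := havgσ.add hσ₂avg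
    refine h1.congr (fun k => ?_)
    rw [← add_div]
    congr 1
    have h2 : psum (fun t => psum (fun s => Δ s + (w s - c)) (t + 1)) k
        = psum (fun t => psum Δ (t + 1) + psum (fun s => w s - c) (t + 1)) k := by
      unfold psum
      exact Finset.sum_congr rfl (fun t _ => hσ'eq (t + 1))
    rw [h2, psum_add']
  have hwb : Bdd w := evp_bdd hp hw
  have hΔb : Bdd Δ := by
    obtain ⟨C, hC⟩ := bdd_sub hdb hwb
    exact ⟨C, fun t => by
      have h1 : |d t - w t| ≤ C := hC t
      have h2 : d t - w t = Δ t := by have := hd t; linarith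
      rwa [h2] at h1⟩
  have hΔ'b : Bdd (fun s => Δ s + (w s - c)) :=
    bdd_add hΔb (bdd_sub hwb ⟨|c|, fun _ => le_rfl⟩)
  have hde : d = fun t => c + (Δ t + (w t - c)) := by
    funext t
    have := hd t; linarith
  set L' : ℝ := L + L₂ with hL'
  have hgb : ∀ n : ℕ, Bdd (fun t => c + (if t < n then L' / n else 0)) := by
    intro n
    refine bdd_add ⟨|c|, fun _ => le_rfl⟩ ⟨|L' / n|, fun t => ?_⟩
    dsimp only; split <;> simp
  rcases lt_trichotomy c 0 with hcneg | hc0 | hcpos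
  · -- c < 0 : 0 ≻ d
    set n : ℕ := Nat.ceil (|L'| / (-c)) + 1 with hn
    have hn1 : 1 ≤ n := Nat.le_add_left 1 _
    have hnpos : (0:ℝ) < n := by exact_mod_cast Nat.lt_of_lt_of_le Nat.zero_lt_one hn1
    have hsp := spread (c := c) hA2 hA3 hn1 hΔ'b hσ'b hσ'avg
    have habs : |L'| / (n : ℝ) < -c := by
      have h1 : |L'| / (-c) < (n : ℝ) := by
        have h2 := Nat.le_ceil (|L'| / (-c))
        have h3 : ((Nat.ceil (|L'| / (-c)) : ℕ) : ℝ) < n := by exact_mod_cast Nat.lt_succ_self _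
        linarith
      rw [div_lt_iff₀ hnpos]
      rw [div_lt_iff₀ (neg_pos.2 hcneg)] at h1
      linarith
    have hneg : ∀ t : ℕ, c + (if t < n then L' / n else 0) < (0 : ℕ → ℝ) t := by
      intro t
      rw [Pi.zero_apply]; split
      · have h4 : L' / (n:ℝ) ≤ |L'| / n := div_le_div_of_nonneg_right (le_abs_self _) hnpos.le
        linarith
      · linarith
    have h0g := hA1 0 _ bdd_zero (hgb n) (fun t => (hneg t).le) ⟨0, hneg 0⟩
    right
    rw [hde]
    exact htrans 0 _ _ bdd_zero (hgb n) (hde ▸ hdb) h0g.1 hsp.2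
  · -- c = 0
    have hsp := spread (c := c) hA2 hA3 (le_refl 1) hΔ'b hσ'b hσ'avg
    have hg0 : ∀ t : ℕ, c + (if t < 1 then L' / ((1:ℕ):ℝ) else 0)
        = if t = 0 then L' else 0 := by
      intro t
      rcases Nat.eq_zero_or_pos t with ht | ht
      · subst ht; rw [if_pos Nat.zero_lt_one, if_pos rfl, hc0, Nat.cast_one, div_one, zero_add]
      · rw [if_neg (by omega), if_neg (by omega), hc0, add_zero]
    rcases lt_trichotomy L' 0 with hL0 | hL0 | hL0
    · -- L' < 0 : 0 ≿ d
      have hneg : ∀ t : ℕ, c + (if t < 1 then L' / ((1:ℕ):ℝ) else 0) ≤ (0 : ℕ → ℝ) t := by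
        intro t; rw [Pi.zero_apply, hg0 t]; split <;> linarith
      have hneg0 : c + (if (0:ℕ) < 1 then L' / ((1:ℕ):ℝ) else 0) < (0 : ℕ → ℝ) 0 := by
        rw [Pi.zero_apply, hg0 0, if_pos rfl]; linarith
      have h0g := hA1 0 _ bdd_zero (hgb 1) hneg ⟨0, hneg0⟩
      right
      rw [hde]
      exact htrans 0 _ _ bdd_zero (hgb 1) (hde ▸ hdb) h0g.1 hsp.2
    · -- L' = 0 : d ∼ 0
      left
      have hgeq : (fun t : ℕ => c + (if t < 1 then L' / ((1:ℕ):ℝ) else 0)) = (0 : ℕ → ℝ) := by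
        funext t
        show c + (if t < 1 then L' / ((1:ℕ):ℝ) else 0) = (0 : ℕ → ℝ) t
        rw [hg0 t, Pi.zero_apply, hL0]
        split <;> rfl
      rw [hde]
      have := hsp.1
      rwa [hgeq] at this
    · -- L' > 0 : d ≿ 0
      have hpos : ∀ t : ℕ, (0 : ℕ → ℝ) t ≤ c + (if t < 1 then L' / ((1:ℕ):ℝ) else 0) := by
        intro t; rw [Pi.zero_apply, hg0 t]; split <;> linarith
      have hpos0 : (0 : ℕ → ℝ) 0 < c + (if (0:ℕ) < 1 then L' / ((1:ℕ):ℝ) else 0) := by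
        rw [Pi.zero_apply, hg0 0, if_pos rfl]; linarith
      have hg00 := hA1 _ 0 (hgb 1) bdd_zero hpos ⟨0, hpos0⟩
      left
      rw [hde]
      exact htrans _ _ 0 (hde ▸ hdb) (hgb 1) bdd_zero hsp.1 hg00.1
  · -- c > 0 : d ≻ 0
    set n : ℕ := Nat.ceil (|L'| / c) + 1 with hn
    have hn1 : 1 ≤ n := Nat.le_add_left 1 _
    have hnpos : (0:ℝ) < n := by exact_mod_cast Nat.lt_of_lt_of_le Nat.zero_lt_one hn1
    have hsp := spread (c := c) hA2 hA3 hn1 hΔ'b hσ'b hσ'avg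
    have habs : |L'| / (n : ℝ) < c := by
      have h1 : |L'| / c < (n : ℝ) := by
        have h2 := Nat.le_ceil (|L'| / c)
        have h3 : ((Nat.ceil (|L'| / c) : ℕ) : ℝ) < n := by exact_mod_cast Nat.lt_succ_self _
        linarith
      rw [div_lt_iff₀ hnpos]
      rw [div_lt_iff₀ hcpos] at h1
      linarith
    have hpos : ∀ t : ℕ, (0 : ℕ → ℝ) t < c + (if t < n then L' / n else 0) := by
      intro t
      rw [Pi.zero_apply]; split
      · have h4 : -(|L'| / (n:ℝ)) ≤ L' / n := by
          rw [← neg_div]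
          exact div_le_div_of_nonneg_right (neg_abs_le _) hnpos.le
        linarith
      · linarith
    have hg00 := hA1 _ 0 (hgb n) bdd_zero (fun t => (hpos t).le) ⟨0, hpos 0⟩
    left
    rw [hde]
    exact htrans _ _ 0 (hde ▸ hdb) (hgb n) bdd_zero hsp.1 hg00.1

lemma evp_iter {z : ℕ → ℝ} {p0 T0 : ℕ} (hz : ∀ t, T0 ≤ t → z (t + p0) = z t) :
    ∀ k t, T0 ≤ t → z (t + p0 * k) = z t := by
  intro k
  induction k with
  | zero => intro t ht; simp
  | succ k ih =>
    intro t ht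
    have h1 : t + p0 * (k + 1) = (t + p0 * k) + p0 := by ring
    rw [h1, hz _ (by omega), ih t ht]

/-- a preference relation satisfying A1–A3 is complete on 𝒰₊. -/
theorem stmt_10 (R : (ℕ → ℝ) → (ℕ → ℝ) → Prop)
    (hrefl : ReflOn R) (htrans : TransOn R)
    (hA1 : AxiomA1 R) (hA2 : AxiomA2 R) (hA3 : AxiomA3 R)
    (u v : ℕ → ℝ) (hu : UPlus u) (hv : UPlus v)
    (h : ¬ R u v) : StrictPref R v u := by
  obtain ⟨hub, wu, Δu, huq, ⟨pu, Tu, hpu1, hpu⟩, hcesu, hbpsu⟩ := hu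
  obtain ⟨hvb, wv, Δv, hvq, ⟨pv, Tv, hpv1, hpv⟩, hcesv, hbpsv⟩ := hv
  have hut : ∀ t, u t = wu t + Δu t := fun t => by rw [huq]; rfl
  have hvt : ∀ t, v t = wv t + Δv t := fun t => by rw [hvq]; rfl
  have hdb : Bdd (fun t => u t - v t) := bdd_sub hub hvb
  have hd : ∀ t, (fun t => u t - v t) t = (fun s => wu s - wv s) t + (fun s => Δu s - Δv s) t := by
    intro t
    show u t - v t = (wu t - wv t) + (Δu t - Δv t)
    have h1 := hut t; have h2 := hvt t; linarith
  have hp1 : 1 ≤ pu * pv := Nat.mul_pos hpu1 hpv1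
  have hwper : ∀ t, max Tu Tv ≤ t →
      (fun s => wu s - wv s) (t + pu * pv) = (fun s => wu s - wv s) t := by
    intro t ht
    show wu (t + pu * pv) - wv (t + pu * pv) = wu t - wv t
    have h1 : wu (t + pu * pv) = wu t :=
      evp_iter hpu pv t (le_trans (le_max_left _ _) ht)
    have h2 : wv (t + pu * pv) = wv t := by
      have h3 : t + pu * pv = t + pv * pu := by ring
      rw [h3]
      exact evp_iter hpv pu t (le_trans (le_max_right _ _) ht)
    rw [h1, h2]
  have hces : CesaroSummable (fun s => Δu s - Δv s) := by
    obtain ⟨Lu, hLu⟩ := hcesu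
    obtain ⟨Lv, hLv⟩ := hcesv
    refine ⟨Lu - Lv, ?_⟩
    have h1 := hLu.sub hLv
    refine h1.congr (fun k => ?_)
    unfold cesaroAvg
    rw [← sub_div]
    congr 1
    rw [← Finset.sum_sub_distrib]
    exact Finset.sum_congr rfl (fun t _ => (psum_sub Δu Δv (t + 1)).symm)
  have hbps : BddPartialSums (fun s => Δu s - Δv s) := by
    obtain ⟨Cu, hCu⟩ := hbpsu
    obtain ⟨Cv, hCv⟩ := hbpsv
    refine ⟨Cu + Cv, fun k => ?_⟩
    rw [psum_sub]
    exact (abs_sub _ _).trans (add_le_add (hCu k) (hCv k))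
  have hkey := key htrans hA1 hA2 hA3 (fun t => u t - v t) (fun s => wu s - wv s)
    (fun s => Δu s - Δv s) (pu * pv) (max Tu Tv) hdb hd hp1 hwper hces hbps
  rcases hkey with hk | hk
  · exfalso
    apply h
    exact transfer hA2 hdb bdd_zero hvb hk
      (fun t => by show u t - v t + v t = u t; ring)
      (fun t => by show (0 : ℕ → ℝ) t + v t = v t; rw [Pi.zero_apply, zero_add])
  · constructor
    · exact transfer hA2 bdd_zero hdb hvb hk
        (fun t => by show (0 : ℕ → ℝ) t + v t = v t; rw [Pi.zero_apply, zero_add])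
        (fun t => by show u t - v t + v t = u t; ring)
    · exact h
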